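/- For every parity game with finitely many priorities whose vertex set V is nonempty, W₀ᵐ(G) ∪ W₁ᵐ(G) ≠ ∅; that is, at least one vertex is won by some player using a memoryless strategy. -/

import Mathlib

/-- A run in the graph `(V, E)`: an infinite `E`-path. -/
def IsRun {V : Type*} (E : Set (V × V)) (ρ : ℕ → V) : Prop :=
  ∀ n, (ρ n, ρ (n + 1)) ∈ E

/-- A run is compatible with a strategy `σ` of the player controlling `Vi`. -/
def Compatible {V : Type*} (Vi : Set V) (σ : V → V) (ρ : ℕ → V) : Prop :=
  ∀ n, ρ n ∈ Vi → ρ (n + 1) = σ (ρ n)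

/-- A memoryless strategy for the player controlling `Vi` (encoded as a total
function whose values matter only on `Vi`). -/
def IsStrategy {V : Type*} (Vi : Set V) (E : Set (V × V)) (σ : V → V) : Prop :=
  ∀ v ∈ Vi, (v, σ v) ∈ E

/-- The strategy `σ` of the player controlling `Vi` whose winning condition is
`Win` wins from `v`: every compatible run from `v` has its color sequence in `Win`. -/
def WinsFrom {V : Type*} {C : Type*} (Vi : Set V) (E : Set (V × V)) (π : V → C)
    (Win : Set (ℕ → C)) (σ : V → V) (v : V) : Prop :=
  ∀ ρ : ℕ → V, ρ 0 = v → IsRun E ρ → Compatible Vi σ ρ → (fun n => π (ρ n)) ∈ Win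

/-- `Wᵢᵐ(G, σ)`: the vertices from which `σ` wins. -/
def WinRegion {V : Type*} {C : Type*} (Vi : Set V) (E : Set (V × V)) (π : V → C)
    (Win : Set (ℕ → C)) (σ : V → V) : Set V :=
  {v | WinsFrom Vi E π Win σ v}

/-- `Wᵢᵐ(G)`: the vertices from which some memoryless strategy wins. -/
def WinRegionAll {V : Type*} {C : Type*} (Vi : Set V) (E : Set (V × V)) (π : V → C)
    (Win : Set (ℕ → C)) : Set V :=
  {v | ∃ σ, IsStrategy Vi E σ ∧ WinsFrom Vi E π Win σ v}

/-- Concatenation `w·ρ` of a finite word and an infinite sequence. -/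
def ListAppend {C : Type*} (w : List C) (ρ : ℕ → C) : ℕ → C :=
  fun n => if h : n < w.length then w.get ⟨n, h⟩ else ρ (n - w.length)

/-- `W` is prefix-independent: `wρ ∈ W ↔ ρ ∈ W`. -/
def PrefixIndependent {C : Type*} (W : Set (ℕ → C)) : Prop :=
  ∀ (w : List C) (ρ : ℕ → C), ListAppend w ρ ∈ W ↔ ρ ∈ W

/-- Uniform memoryless determinacy of the game `⟨V₀, V₁, E, π, W⟩`. -/
def UniformlyDetermined {V : Type*} {C : Type*} (V0 V1 : Set V) (E : Set (V × V))
    (π : V → C) (W : Set (ℕ → C)) : Prop :=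
  ∃ σ τ, IsStrategy V0 E σ ∧ IsStrategy V1 E τ ∧
    WinRegion V0 E π W σ ∪ WinRegion V1 E π Wᶜ τ = Set.univ

/-- The set of values occurring infinitely often in `u`. -/
def InfOcc (u : ℕ → ℕ) : Set ℕ := {k | ∀ N, ∃ n, N ≤ n ∧ u n = k}

/-- `max_∞(u)`: the maximal value occurring infinitely often (as `sSup`,
well defined for bounded `u`). -/
noncomputable def MaxInf (u : ℕ → ℕ) : ℕ := sSup (InfOcc u)

/-- The parity winning condition for Player 0: `max_∞` is even. -/
def ParityWin : Set (ℕ → ℕ) := {u | Even (MaxInf u)}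

/-- A vertex is absorbing if its only outgoing edge is a self-loop. -/
def Absorbing {V : Type*} (E : Set (V × V)) (v : V) : Prop :=
  {u | (v, u) ∈ E} = {v}

/-- A vertex is vanishing if it has no incoming edge. -/
def Vanishing {V : Type*} (E : Set (V × V)) (v : V) : Prop :=
  ∀ u, (u, v) ∉ E

/-- A vertex is relevant if it is neither absorbing nor vanishing. -/
def Relevant {V : Type*} (E : Set (V × V)) (v : V) : Prop :=
  ¬ Absorbing E v ∧ ¬ Vanishing E v

namespace Stmt8Aux

theorem infOcc_shift (u : ℕ → ℕ) (N : ℕ) : InfOcc (fun n => u (n + N)) = InfOcc u := by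
  ext k
  constructor
  · rintro h M
    obtain ⟨n, hn, he⟩ := h M
    exact ⟨n + N, le_trans hn (Nat.le_add_right _ _), he⟩
  · rintro h M
    obtain ⟨n, hn, he⟩ := h (M + N)
    refine ⟨n - N, ?_, ?_⟩
    · omega
    · show u (n - N + N) = k
      have : n - N + N = n := by omega
      rw [this]; exact he

theorem maxInf_shift (u : ℕ → ℕ) (N : ℕ) : MaxInf (fun n => u (n + N)) = MaxInf u := by
  unfold MaxInf; rw [infOcc_shift]

theorem maxInf_top (u : ℕ → ℕ) (p : ℕ) (hb : ∀ n, u n ≤ p)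
    (hp : ∀ N, ∃ n, N ≤ n ∧ u n = p) : MaxInf u = p := by
  have hmem : p ∈ InfOcc u := hp
  have hub : ∀ k ∈ InfOcc u, k ≤ p := by
    intro k hk
    obtain ⟨n, _, he⟩ := hk 0
    exact he ▸ hb n
  exact le_antisymm (csSup_le ⟨p, hmem⟩ hub) (le_csSup ⟨p, hub⟩ hmem)

universe u
variable {V : Type u}

section Game

variable (V0 V1 : Set V) (E : Set (V × V)) (π : V → ℕ)

/-- the vertex set of player `b` (`false` = player 0). -/
def P (b : Bool) : Set V := if b then V1 else V0

/-- `m` is a good `MaxInf` value for player `b`. -/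
def GoodM (b : Bool) (m : ℕ) : Prop := if b then ¬ Even m else Even m

/-- color sequence is winning for player `b`. -/
def Good (b : Bool) (w : ℕ → ℕ) : Prop := GoodM b (MaxInf w)

/-- memoryless strategy for player `b` inside sub-arena `U`. -/
def StratIn (U : Set V) (b : Bool) (σ : V → V) : Prop :=
  ∀ v, v ∈ P V0 V1 b → v ∈ U → (v, σ v) ∈ E ∧ σ v ∈ U

/-- `σ` wins for `b` from `v` inside sub-arena `U`. -/
def WinsIn (U : Set V) (b : Bool) (σ : V → V) (v : V) : Prop :=
  ∀ ρ : ℕ → V, ρ 0 = v → (∀ n, ρ n ∈ U) → (∀ n, (ρ n, ρ (n + 1)) ∈ E) →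
    (∀ n, ρ n ∈ P V0 V1 b → ρ (n + 1) = σ (ρ n)) → Good b (fun n => π (ρ n))

/-- vertices of `U` from which `b` wins with some memoryless strategy. -/
def Region (U : Set V) (b : Bool) : Set V :=
  {v | v ∈ U ∧ ∃ σ, StratIn V0 V1 E U b σ ∧ WinsIn V0 V1 E π U b σ v}

/-- every vertex of `U` has a successor inside `U`. -/
def Closed (U : Set V) : Prop := ∀ v ∈ U, ∃ u, u ∈ U ∧ (v, u) ∈ E

end Game

variable {V0 V1 : Set V} {E : Set (V × V)} {π : V → ℕ}

theorem mem_P_not (hcover : V0 ∪ V1 = Set.univ) {b : Bool} {v : V}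
    (h : v ∉ P V0 V1 b) : v ∈ P V0 V1 (!b) := by
  have : v ∈ V0 ∪ V1 := hcover ▸ Set.mem_univ v
  rcases this with h0 | h1 <;> cases b <;> simp_all [P]

open Classical in
/-- a default strategy moving inside `U`. -/
noncomputable def fb (E : Set (V × V)) (U : Set V) : V → V := fun v =>
  if h : ∃ u, u ∈ U ∧ (v, u) ∈ E then h.choose else v

theorem fb_spec (U : Set V) {v : V} (hcl : Closed E U) (hv : v ∈ U) :
    (v, fb E U v) ∈ E ∧ fb E U v ∈ U := by
  have h : ∃ u, u ∈ U ∧ (v, u) ∈ E := hcl v hv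
  simp only [fb]
  rw [dif_pos h]
  exact ⟨h.choose_spec.2, h.choose_spec.1⟩

theorem good_shift {b : Bool} {w : ℕ → ℕ} (N : ℕ) :
    Good b (fun n => w (n + N)) ↔ Good b w := by
  unfold Good
  rw [maxInf_shift]

/-- winning positions are closed under compatible steps. -/
theorem winsIn_step {U : Set V} {b : Bool} {σ : V → V} {v u : V}
    (hW : WinsIn V0 V1 E π U b σ v) (hv : v ∈ U) (hu : u ∈ U) (he : (v, u) ∈ E)
    (hc : v ∈ P V0 V1 b → u = σ v) : WinsIn V0 V1 E π U b σ u := by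
  intro ρ h0 hU hE' hcomp
  set ρ' : ℕ → V := fun n => Nat.rec v (fun k _ => ρ k) n with hρ'
  have h'0 : ρ' 0 = v := rfl
  have h's : ∀ n, ρ' (n + 1) = ρ n := fun n => rfl
  have hGood : Good b (fun n => π (ρ' n)) := by
    apply hW ρ' h'0
    · intro n; cases n with
      | zero => exact hv
      | succ k => rw [h's]; exact hU k
    · intro n; cases n with
      | zero => rw [h'0, h's, h0]; exact he
      | succ k => rw [h's, h's]; exact hE' k
    · intro n; cases n with
      | zero => intro hp; rw [h'0] at hp ⊢; rw [h's, h0]; exact hc hp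
      | succ k => intro hp; rw [h's] at hp ⊢; rw [h's]; exact hcomp k hp
  have heq : (fun n => π (ρ n)) = (fun n => (fun m => π (ρ' m)) (n + 1)) := by
    funext n
    show π (ρ n) = π (ρ' (n + 1))
    rw [h's]
  rw [heq]
  exact (good_shift 1).mpr hGood

/-- Uniformization: one strategy winning from the whole region. -/
theorem uniform {U : Set V} {b : Bool} (hcl : Closed E U) :
    ∃ σ, StratIn V0 V1 E U b σ ∧
      ∀ v ∈ Region V0 V1 E π U b, WinsIn V0 V1 E π U b σ v := by
  classical
  set R := Region V0 V1 E π U b with hR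
  let S := {σ : V → V // StratIn V0 V1 E U b σ}
  have wf : WellFounded (WellOrderingRel : S → S → Prop) := IsWellFounded.wf
  have hfb : StratIn V0 V1 E U b (fb E U) := fun v _ hvU => fb_spec U hcl hvU
  have hne : ∀ v ∈ R, {s : S | WinsIn V0 V1 E π U b s.1 v}.Nonempty := by
    rintro v ⟨hvU, σ, hσ, hw⟩; exact ⟨⟨σ, hσ⟩, hw⟩
  let m : V → S := fun v =>
    if hv : v ∈ R then wf.min _ (hne v hv) else ⟨fb E U, hfb⟩
  have hm_win : ∀ v (hv : v ∈ R), WinsIn V0 V1 E π U b (m v).1 v := by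
    intro v hv
    simp only [m, dif_pos hv]
    exact wf.min_mem _ (hne v hv)
  have hm_min : ∀ v (hv : v ∈ R) (s : S), WinsIn V0 V1 E π U b s.1 v →
      ¬ WellOrderingRel s (m v) := by
    intro v hv s hs
    simp only [m, dif_pos hv]
    exact wf.not_lt_min _ hs
  let σs : V → V := fun v => (m v).1 v
  refine ⟨σs, fun v hpb hvU => (m v).2 v hpb hvU, ?_⟩
  intro v hv ρ h0 hU hE' hcomp
  -- every position stays in the region
  have hstep : ∀ n, ρ n ∈ R → WinsIn V0 V1 E π U b (m (ρ n)).1 (ρ (n + 1)) := by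
    intro n hn
    refine winsIn_step (hm_win _ hn) (hU n) (hU (n + 1)) (hE' n) ?_
    intro hpb
    exact hcomp n hpb
  have hmem : ∀ n, ρ n ∈ R := by
    intro n
    induction n with
    | zero => rw [h0]; exact hv
    | succ k ih => exact ⟨hU (k + 1), (m (ρ k)).1, (m (ρ k)).2, hstep k ih⟩
  have hdec : ∀ n, m (ρ (n + 1)) = m (ρ n) ∨
      WellOrderingRel (m (ρ (n + 1))) (m (ρ n)) := by
    intro n
    have hnot : ¬ WellOrderingRel (m (ρ n)) (m (ρ (n + 1))) :=
      hm_min _ (hmem (n + 1)) _ (hstep n (hmem n))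
    rcases trichotomous_of WellOrderingRel (m (ρ (n + 1))) (m (ρ n)) with h | h | h
    · exact Or.inr h
    · exact Or.inl h
    · exact absurd h hnot
  -- the strategy index stabilizes
  let g : ℕ → S := fun n => m (ρ n)
  have hrange : (Set.range g).Nonempty := ⟨g 0, 0, rfl⟩
  obtain ⟨N, hN⟩ : ∃ N, g N = wf.min (Set.range g) hrange := by
    have := wf.min_mem (Set.range g) hrange
    obtain ⟨N, hN⟩ := this
    exact ⟨N, hN⟩
  have hconst : ∀ n, N ≤ n → g n = g N := by
    intro n hn
    induction n, hn using Nat.le_induction with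
    | base => rfl
    | succ k hk ih =>
      rcases hdec k with h | h
      · show m (ρ (k + 1)) = g N
        rw [h]; exact ih
      · exfalso
        have : WellOrderingRel (g (k + 1)) (wf.min (Set.range g) hrange) := by
          have h2 : g k = wf.min (Set.range g) hrange := ih.trans hN
          rw [← h2]; exact h
        exact wf.not_lt_min (Set.range g) ⟨k + 1, rfl⟩ this
  -- conclude with the stabilized strategy
  have hwin := hm_win (ρ N) (hmem N)
  have hGood : Good b (fun n => π (ρ (n + N))) := by
    refine hwin (fun n => ρ (n + N)) (by show ρ (0 + N) = ρ N; rw [Nat.zero_add]) (fun n => hU _) ?_ ?_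
    · intro n
      have := hE' (n + N)
      show (ρ (n + N), ρ (n + 1 + N)) ∈ E
      rwa [show n + 1 + N = n + N + 1 by omega]
    · intro n hpb
      have h1 : ρ (n + N + 1) = σs (ρ (n + N)) := hcomp (n + N) hpb
      have h2 : m (ρ (n + N)) = g N := hconst (n + N) (by omega)
      show ρ (n + 1 + N) = (m (ρ N)).1 (ρ (n + N))
      rw [show n + 1 + N = n + N + 1 by omega, h1]
      show (m (ρ (n + N))).1 (ρ (n + N)) = (m (ρ N)).1 (ρ (n + N))
      rw [show m (ρ (n + N)) = m (ρ N) from h2]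
  exact (good_shift N).mp hGood

section Attractor

variable (E : Set (V × V)) (Pb U T : Set V)

/-- ordinal-indexed attractor approximations of `T` for the player with
vertex set `Pb`, inside the sub-arena `U`. -/
noncomputable def attrA : Ordinal.{u} → Set V :=
  fun α =>
    (T ∪ {v | v ∈ U ∧ v ∈ Pb ∧ ∃ w, (v, w) ∈ E ∧ w ∈ U ∧
        ∃ β : Ordinal.{u}, ∃ _ : β < α, w ∈ attrA β}) ∪
      {v | v ∈ U ∧ v ∉ Pb ∧ ∀ w, (v, w) ∈ E → w ∈ U →
        ∃ β : Ordinal.{u}, ∃ _ : β < α, w ∈ attrA β}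
  termination_by α => α
  decreasing_by all_goals assumption

/-- the attractor. -/
def Attr : Set V := {v | ∃ α, v ∈ attrA E Pb U T α}

/-- attractor rank. -/
noncomputable def rank (v : V) : Ordinal.{u} := sInf {α | v ∈ attrA E Pb U T α}

open Classical in
/-- the attractor strategy. -/
noncomputable def aStep (v : V) : V :=
  if h : ∃ w, (v, w) ∈ E ∧ w ∈ U ∧ w ∈ Attr E Pb U T ∧
      rank E Pb U T w < rank E Pb U T v
  then h.choose else v

variable {E Pb U T}

theorem mem_attrA {α : Ordinal.{u}} {v : V} : v ∈ attrA E Pb U T α ↔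
    (v ∈ T ∨ (v ∈ U ∧ v ∈ Pb ∧ ∃ w, (v, w) ∈ E ∧ w ∈ U ∧
        ∃ β : Ordinal.{u}, ∃ _ : β < α, w ∈ attrA E Pb U T β)) ∨
      (v ∈ U ∧ v ∉ Pb ∧ ∀ w, (v, w) ∈ E → w ∈ U →
        ∃ β : Ordinal.{u}, ∃ _ : β < α, w ∈ attrA E Pb U T β) := by
  rw [attrA]
  simp only [Set.mem_union, Set.mem_setOf_eq]

theorem attr_rank_mem {v : V} (h : v ∈ Attr E Pb U T) :
    v ∈ attrA E Pb U T (rank E Pb U T v) := csInf_mem h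

theorem rank_le {v : V} {α : Ordinal.{u}} (h : v ∈ attrA E Pb U T α) :
    rank E Pb U T v ≤ α := csInf_le' h

theorem subset_attr : T ⊆ Attr E Pb U T :=
  fun _ hv => ⟨0, mem_attrA.mpr (Or.inl (Or.inl hv))⟩

theorem attr_step_pb {v : V} (hA : v ∈ Attr E Pb U T) (hT : v ∉ T) (hp : v ∈ Pb) :
    ∃ w, (v, w) ∈ E ∧ w ∈ U ∧ w ∈ Attr E Pb U T ∧
      rank E Pb U T w < rank E Pb U T v := by
  have h := attr_rank_mem hA
  rw [mem_attrA] at h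
  rcases h with (h | ⟨_, _, w, he, hu, β, hβ, hm⟩) | ⟨_, hnp, _⟩
  · exact absurd h hT
  · exact ⟨w, he, hu, ⟨β, hm⟩, lt_of_le_of_lt (rank_le hm) hβ⟩
  · exact absurd hp hnp

theorem attr_step_o {v : V} (hA : v ∈ Attr E Pb U T) (hT : v ∉ T) (hp : v ∉ Pb)
    {w : V} (he : (v, w) ∈ E) (hu : w ∈ U) :
    w ∈ Attr E Pb U T ∧ rank E Pb U T w < rank E Pb U T v := by
  have h := attr_rank_mem hA
  rw [mem_attrA] at h
  rcases h with (h | ⟨_, hp', _⟩) | ⟨_, _, hall⟩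
  · exact absurd h hT
  · exact absurd hp' hp
  · obtain ⟨β, hβ, hm⟩ := hall w he hu
    exact ⟨⟨β, hm⟩, lt_of_le_of_lt (rank_le hm) hβ⟩

theorem attr_closed_pb {v w : V} (hv : v ∈ U) (hp : v ∈ Pb) (he : (v, w) ∈ E)
    (hu : w ∈ U) (hA : w ∈ Attr E Pb U T) : v ∈ Attr E Pb U T := by
  refine ⟨Order.succ (rank E Pb U T w), mem_attrA.mpr (Or.inl (Or.inr
    ⟨hv, hp, w, he, hu, rank E Pb U T w, Order.lt_succ _, attr_rank_mem hA⟩))⟩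

theorem attr_closed_o {v : V} (hv : v ∈ U) (hp : v ∉ Pb)
    (h : ∀ w, (v, w) ∈ E → w ∈ U → w ∈ Attr E Pb U T) : v ∈ Attr E Pb U T := by
  classical
  refine ⟨Order.succ (⨆ i : {w : V // (v, w) ∈ E ∧ w ∈ U}, rank E Pb U T i.1),
    mem_attrA.mpr (Or.inr ⟨hv, hp, ?_⟩)⟩
  intro w he hu
  refine ⟨rank E Pb U T w, lt_of_le_of_lt ?_ (Order.lt_succ _),
    attr_rank_mem (h w he hu)⟩
  exact le_ciSup (Ordinal.bddAbove_range _) (⟨w, he, hu⟩ : {w : V // (v, w) ∈ E ∧ w ∈ U})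

theorem aStep_spec {v : V} (hA : v ∈ Attr E Pb U T) (hT : v ∉ T) (hp : v ∈ Pb) :
    (v, aStep E Pb U T v) ∈ E ∧ aStep E Pb U T v ∈ U ∧
      aStep E Pb U T v ∈ Attr E Pb U T ∧
      rank E Pb U T (aStep E Pb U T v) < rank E Pb U T v := by
  have h := attr_step_pb hA hT hp
  simp only [aStep]
  rw [dif_pos h]
  exact h.choose_spec

theorem attr_reach {v : V} (hA : v ∈ Attr E Pb U T) (ρ : ℕ → V) (h0 : ρ 0 = v)
    (hU : ∀ n, ρ n ∈ U) (hE' : ∀ n, (ρ n, ρ (n + 1)) ∈ E)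
    (hcomp : ∀ n, ρ n ∈ Pb → ρ n ∈ Attr E Pb U T → ρ n ∉ T →
      ρ (n + 1) = aStep E Pb U T (ρ n)) :
    ∃ n, ρ n ∈ T := by
  have main : ∀ α : Ordinal.{u}, ∀ ρ : ℕ → V, ρ 0 ∈ Attr E Pb U T →
      rank E Pb U T (ρ 0) = α → (∀ n, ρ n ∈ U) → (∀ n, (ρ n, ρ (n + 1)) ∈ E) →
      (∀ n, ρ n ∈ Pb → ρ n ∈ Attr E Pb U T → ρ n ∉ T →
        ρ (n + 1) = aStep E Pb U T (ρ n)) → ∃ n, ρ n ∈ T := by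
    intro α
    induction α using Ordinal.induction with
    | _ α ih =>
      intro ρ hA0 hr hU hE' hcomp
      by_cases hT0 : ρ 0 ∈ T
      · exact ⟨0, hT0⟩
      have hnext : ρ 1 ∈ Attr E Pb U T ∧ rank E Pb U T (ρ 1) < α := by
        by_cases hp : ρ 0 ∈ Pb
        · have hs := aStep_spec hA0 hT0 hp
          have heq := hcomp 0 hp hA0 hT0
          rw [heq]
          exact ⟨hs.2.2.1, hr ▸ hs.2.2.2⟩
        · have h := attr_step_o hA0 hT0 hp (hE' 0) (hU 1)
          exact ⟨h.1, hr ▸ h.2⟩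
      obtain ⟨m, hm⟩ := ih (rank E Pb U T (ρ 1)) hnext.2 (fun n => ρ (n + 1))
        hnext.1 rfl (fun n => hU _) (fun n => hE' (n + 1))
        (fun n hp hA' hT' => hcomp (n + 1) hp hA' hT')
      exact ⟨m + 1, hm⟩
  exact main (rank E Pb U T (ρ 0)) ρ (h0 ▸ hA) rfl hU hE' hcomp

theorem compl_pb {v w : V} (hv : v ∈ U) (hp : v ∈ Pb) (hvA : v ∉ Attr E Pb U T)
    (he : (v, w) ∈ E) (hu : w ∈ U) : w ∉ Attr E Pb U T :=
  fun hA => hvA (attr_closed_pb hv hp he hu hA)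

theorem compl_o (hcl : Closed E U) {v : V} (hv : v ∈ U) (hp : v ∉ Pb)
    (hvA : v ∉ Attr E Pb U T) :
    ∃ w, w ∈ U ∧ (v, w) ∈ E ∧ w ∉ Attr E Pb U T := by
  by_contra hc
  push_neg at hc
  exact hvA (attr_closed_o hv hp fun w he hu => hc w hu he)

end Attractor

/-- lifting a sub-arena win to the full arena when the opponent cannot escape. -/
theorem lift_win {U U' : Set V} {c : Bool} {σ : V → V}
    (hcl : Closed E U) (hsub : U' ⊆ U)
    (hopp : ∀ v w, v ∈ U' → v ∉ P V0 V1 c → (v, w) ∈ E → w ∈ U → w ∈ U')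
    (hσ : StratIn V0 V1 E U' c σ) :
    ∃ σ', StratIn V0 V1 E U c σ' ∧
      ∀ v ∈ U', WinsIn V0 V1 E π U' c σ v → WinsIn V0 V1 E π U c σ' v := by
  classical
  refine ⟨fun v => if v ∈ U' then σ v else fb E U v, ?_, ?_⟩
  · intro v hpb hvU
    by_cases h : v ∈ U'
    · simp only [if_pos h]
      exact ⟨(hσ v hpb h).1, hsub (hσ v hpb h).2⟩
    · simp only [if_neg h]; exact fb_spec U hcl hvU
  · intro v hv hw ρ h0 hU hE' hcomp
    have hmem : ∀ n, ρ n ∈ U' := by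
      intro n; induction n with
      | zero => rw [h0]; exact hv
      | succ k ih =>
        by_cases hpb : ρ k ∈ P V0 V1 c
        · have hc := hcomp k hpb
          rw [hc]
          show (if ρ k ∈ U' then σ (ρ k) else fb E U (ρ k)) ∈ U'
          rw [if_pos ih]
          exact (hσ _ hpb ih).2
        · exact hopp _ _ ih hpb (hE' k) (hU (k + 1))
    apply hw ρ h0 hmem hE'
    intro n hpb
    rw [hcomp n hpb]
    show (if ρ n ∈ U' then σ (ρ n) else fb E U (ρ n)) = σ (ρ n)
    rw [if_pos (hmem n)]

/-- the determinacy statement at level `p`. -/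
def DStat (V0 V1 : Set V) (E : Set (V × V)) (π : V → ℕ) (p : ℕ) : Prop :=
  ∀ U : Set V, Closed E U → (∀ v ∈ U, π v ≤ p) →
    ∀ v ∈ U, v ∈ Region V0 V1 E π U false ∪ Region V0 V1 E π U true

/-- key lemma: if the opponent of the player `b` favored by the top priority
`p+1` wins nowhere, then `b` wins everywhere, uniformly. -/
theorem keyL (hcover : V0 ∪ V1 = Set.univ) {p : ℕ} {b : Bool} (hb : GoodM b (p + 1))
    (hD : DStat V0 V1 E π p) {U : Set V} (hcl : Closed E U)
    (hπ : ∀ v ∈ U, π v ≤ p + 1) (hreg : Region V0 V1 E π U (!b) = ∅) :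
    ∃ σ, StratIn V0 V1 E U b σ ∧ ∀ v ∈ U, WinsIn V0 V1 E π U b σ v := by
  classical
  set Pb := P V0 V1 b with hPb
  set T : Set V := {v | v ∈ U ∧ π v = p + 1} with hT
  set A := Attr E Pb U T with hA
  set U' := U \ A with hU'
  have hU'cl : Closed E U' := by
    intro v hv
    by_cases hpb : v ∈ Pb
    · obtain ⟨w, hwU, hwe⟩ := hcl v hv.1
      exact ⟨w, ⟨hwU, compl_pb hv.1 hpb hv.2 hwe hwU⟩, hwe⟩
    · obtain ⟨w, hwU, hwe, hwA⟩ := compl_o hcl hv.1 hpb hv.2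
      exact ⟨w, ⟨hwU, hwA⟩, hwe⟩
  have hπ' : ∀ v ∈ U', π v ≤ p := by
    intro v hv
    have h1 : π v ≤ p + 1 := hπ v hv.1
    by_contra hgt
    have hEq : π v = p + 1 := by omega
    exact hv.2 (subset_attr ⟨hv.1, hEq⟩)
  -- the opponent wins nowhere in the sub-arena U'
  have hregU' : Region V0 V1 E π U' (!b) = ∅ := by
    ext w
    simp only [Set.mem_empty_iff_false, iff_false]
    rintro ⟨hwU', σ1, hσ1, hw1⟩
    have hopp2 : ∀ x y, x ∈ U' → x ∉ P V0 V1 (!b) → (x, y) ∈ E → y ∈ U → y ∈ U' := by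
      intro x y hx hnpb he hyU
      have h := mem_P_not hcover (b := !b) hnpb
      rw [Bool.not_not] at h
      exact ⟨hyU, compl_pb hx.1 h hx.2 he hyU⟩
    obtain ⟨σ', hσ', hlift⟩ := lift_win (U := U) (U' := U') (c := !b) hcl
      (fun x hx => hx.1) hopp2 hσ1
    have hmem : w ∈ Region V0 V1 E π U (!b) :=
      ⟨hwU'.1, σ', hσ', hlift w hwU' hw1⟩
    rw [hreg] at hmem
    exact hmem
  -- by induction, b wins everywhere in U'
  have hAll : ∀ v ∈ U', v ∈ Region V0 V1 E π U' b := by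
    intro v hv
    have h := hD U' hU'cl hπ' v hv
    cases b
    · rcases h with h | h
      · exact h
      · simp only [Bool.not_false] at hregU'
        rw [hregU'] at h
        exact h.elim
    · rcases h with h | h
      · simp only [Bool.not_true] at hregU'
        rw [hregU'] at h
        exact h.elim
      · exact h
  obtain ⟨σU, hσU, hwU0⟩ := uniform (b := b) hU'cl
  have hwU : ∀ v ∈ U', WinsIn V0 V1 E π U' b σU v := fun v hv => hwU0 v (hAll v hv)
  -- the combined strategy
  set σst : V → V := fun v =>
    if v ∈ A ∧ v ∉ T ∧ v ∈ Pb then aStep E Pb U T v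
    else if v ∈ U' then σU v else fb E U v with hσst
  have hstrat : StratIn V0 V1 E U b σst := by
    intro v hpb hvU
    by_cases h1 : v ∈ A ∧ v ∉ T ∧ v ∈ Pb
    · simp only [hσst, if_pos h1]
      have hs := aStep_spec h1.1 h1.2.1 h1.2.2
      exact ⟨hs.1, hs.2.1⟩
    · simp only [hσst, if_neg h1]
      by_cases h2 : v ∈ U'
      · rw [if_pos h2]
        have h := hσU v hpb h2
        exact ⟨h.1, h.2.1⟩
      · rw [if_neg h2]; exact fb_spec U hcl hvU
  refine ⟨σst, hstrat, ?_⟩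
  intro v hv ρ h0 hU hE' hcomp
  by_cases hfreq : ∀ N, ∃ n, N ≤ n ∧ ρ n ∈ T
  · -- the top priority is seen infinitely often
    have hmax : MaxInf (fun n => π (ρ n)) = p + 1 := by
      apply maxInf_top _ _ (fun n => hπ _ (hU n))
      intro N
      obtain ⟨n, hn, hTn⟩ := hfreq N
      exact ⟨n, hn, hTn.2⟩
    show GoodM b (MaxInf fun n => π (ρ n))
    rw [hmax]
    exact hb
  · push_neg at hfreq
    obtain ⟨N, hN⟩ := hfreq
    -- after time N the run never visits the attractor
    have hnoA : ∀ n, N ≤ n → ρ n ∉ A := by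
      intro n hn hAn
      obtain ⟨m, hm⟩ := attr_reach (v := ρ n) hAn (fun k => ρ (k + n))
        (by show ρ (0 + n) = ρ n; rw [Nat.zero_add]) (fun k => hU _)
        (fun k => by
          have h := hE' (k + n)
          show (ρ (k + n), ρ (k + 1 + n)) ∈ E
          rwa [show k + 1 + n = k + n + 1 by omega])
        (fun k hp hA' hT' => by
          have h1 := hcomp (k + n) hp
          have hcond : ρ (k + n) ∈ A ∧ ρ (k + n) ∉ T ∧ ρ (k + n) ∈ Pb :=
            ⟨hA', hT', hp⟩
          show ρ (k + 1 + n) = aStep E Pb U T (ρ (k + n))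
          rw [show k + 1 + n = k + n + 1 by omega, h1]
          simp only [hσst]
          rw [if_pos hcond])
      exact hN (m + n) (by omega) hm
    have htail : ∀ n, N ≤ n → ρ n ∈ U' := fun n hn => ⟨hU n, hnoA n hn⟩
    have hwin := hwU (ρ N) (htail N le_rfl)
    have hGood : Good b (fun k => π (ρ (k + N))) := by
      apply hwin (fun k => ρ (k + N)) (by show ρ (0 + N) = ρ N; rw [Nat.zero_add])
        (fun k => htail _ (by omega))
        (fun k => by
          have h := hE' (k + N)
          show (ρ (k + N), ρ (k + 1 + N)) ∈ E
          rwa [show k + 1 + N = k + N + 1 by omega])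
      intro k hpb
      have h1 := hcomp (k + N) hpb
      have hA' : ¬(ρ (k + N) ∈ A ∧ ρ (k + N) ∉ T ∧ ρ (k + N) ∈ Pb) :=
        fun hc => hnoA (k + N) (by omega) hc.1
      have h2 : ρ (k + N) ∈ U' := htail (k + N) (by omega)
      show ρ (k + 1 + N) = σU (ρ (k + N))
      rw [show k + 1 + N = k + N + 1 by omega, h1]
      simp only [hσst]
      rw [if_neg hA', if_pos h2]
    exact (good_shift N).mp hGood

/-- positional determinacy, by induction on the priority bound. -/
theorem Dmain (hcover : V0 ∪ V1 = Set.univ) : ∀ p : ℕ, DStat V0 V1 E π p := by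
  intro p
  induction p with
  | zero =>
    intro U hcl hπ v hv
    left
    refine ⟨hv, fb E U, fun w _ hw => fb_spec U hcl hw, ?_⟩
    intro ρ _ hU _ _
    show GoodM false (MaxInf fun n => π (ρ n))
    have hmax : MaxInf (fun n => π (ρ n)) = 0 :=
      maxInf_top _ 0 (fun n => hπ _ (hU n))
        (fun N => ⟨N, le_rfl, Nat.le_zero.mp (hπ _ (hU N))⟩)
    rw [hmax]
    simp [GoodM]
  | succ p ih =>
    intro U hcl hπ v hv
    classical
    obtain ⟨b, hb⟩ : ∃ b, GoodM b (p + 1) := by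
      by_cases h : Even (p + 1)
      · exact ⟨false, by simpa [GoodM] using h⟩
      · exact ⟨true, by simpa [GoodM] using h⟩
    set X := Region V0 V1 E π U (!b) with hX
    by_cases hvX : v ∈ X
    · cases b
      · exact Or.inr hvX
      · exact Or.inl hvX
    · set Y := U \ X with hY
      have hvY : v ∈ Y := ⟨hv, hvX⟩
      obtain ⟨τ, hτ, hwτ⟩ := uniform (b := !b) hcl
      -- Y is closed for the b-player: some successor stays in Y
      have hf1 : ∀ w ∈ Y, w ∈ P V0 V1 b → ∃ u, (w, u) ∈ E ∧ u ∈ Y := by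
        intro w hw hpb
        by_contra hc
        push_neg at hc
        have hallX : ∀ u, (w, u) ∈ E → u ∈ U → u ∈ X := by
          intro u he hu
          by_contra hx
          exact hc u he ⟨hu, hx⟩
        apply hw.2
        refine ⟨hw.1, τ, hτ, ?_⟩
        intro ρ h0 hU' hE' hcomp
        have h1 : ρ 1 ∈ X := hallX _ (h0 ▸ hE' 0) (hU' 1)
        have hXn : ∀ n, WinsIn V0 V1 E π U (!b) τ (ρ (n + 1)) ∧ ρ (n + 1) ∈ X := by
          intro n
          induction n with
          | zero => exact ⟨hwτ _ h1, h1⟩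
          | succ k ihk =>
            have hs := winsIn_step ihk.1 (hU' (k + 1)) (hU' (k + 2)) (hE' (k + 1))
              (fun hpb' => hcomp (k + 1) hpb')
            exact ⟨hs, ⟨hU' (k + 2), τ, hτ, hs⟩⟩
        have hG : Good (!b) (fun n => π (ρ (n + 1))) :=
          (hXn 0).1 (fun n => ρ (n + 1)) rfl (fun n => hU' _) (fun n => hE' (n + 1))
            (fun n hp => hcomp (n + 1) hp)
        exact (good_shift 1).mp hG
      -- Y is a trap for the opponent
      have hf2 : ∀ w ∈ Y, w ∈ P V0 V1 (!b) → ∀ u, (w, u) ∈ E → u ∈ U → u ∈ Y := by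
        intro w hw hpb u he hu
        by_contra hx
        have huX : u ∈ X := by
          by_contra h
          exact hx ⟨hu, h⟩
        apply hw.2
        refine ⟨hw.1, fun x => if x = w then u else τ x, ?_, ?_⟩
        · intro x hpx hxU
          show (x, if x = w then u else τ x) ∈ E ∧ (if x = w then u else τ x) ∈ U
          by_cases hxw : x = w
          · rw [if_pos hxw]; subst hxw; exact ⟨he, hu⟩
          · rw [if_neg hxw]; exact hτ x hpx hxU
        · intro ρ h0 hU' hE' hcomp
          have h1 : ρ 1 = u := by
            have hc0 := hcomp 0 (h0.symm ▸ hpb)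
            rw [h0] at hc0
            show ρ (0 + 1) = u
            rw [hc0]
            show (if w = w then u else τ w) = u
            rw [if_pos rfl]
          have hXn : ∀ n, WinsIn V0 V1 E π U (!b) τ (ρ (n + 1)) ∧ ρ (n + 1) ∈ X := by
            intro n
            induction n with
            | zero => rw [h1]; exact ⟨hwτ _ huX, huX⟩
            | succ k ihk =>
              have hne : ρ (k + 1) ≠ w := fun hqq => hw.2 (hqq ▸ ihk.2)
              have hs := winsIn_step ihk.1 (hU' (k + 1)) (hU' (k + 2)) (hE' (k + 1))
                (fun hpb' => by
                  have hc := hcomp (k + 1) hpb'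
                  rw [hc]
                  show (if ρ (k + 1) = w then u else τ (ρ (k + 1))) = τ (ρ (k + 1))
                  rw [if_neg hne])
              exact ⟨hs, ⟨hU' (k + 2), τ, hτ, hs⟩⟩
          have hG : Good (!b) (fun n => π (ρ (n + 1))) := by
            refine (hXn 0).1 (fun n => ρ (n + 1)) rfl (fun n => hU' _)
              (fun n => hE' (n + 1)) ?_
            intro n hp
            have hne : ρ (n + 1) ≠ w := fun hqq => hw.2 (hqq ▸ (hXn n).2)
            have hc := hcomp (n + 1) hp
            show ρ (n + 1 + 1) = τ (ρ (n + 1))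
            rw [hc]
            show (if ρ (n + 1) = w then u else τ (ρ (n + 1))) = τ (ρ (n + 1))
            rw [if_neg hne]
          exact (good_shift 1).mp hG
      have hYcl : Closed E Y := by
        intro w hw
        by_cases hpb : w ∈ P V0 V1 b
        · obtain ⟨u, he, hu⟩ := hf1 w hw hpb
          exact ⟨u, hu, he⟩
        · have hpb' := mem_P_not hcover hpb
          obtain ⟨u, hu, he⟩ := hcl w hw.1
          exact ⟨u, hf2 w hw hpb' u he hu, he⟩
      -- the opponent wins nowhere in the sub-arena Y
      have hregY : Region V0 V1 E π Y (!b) = ∅ := by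
        ext w
        simp only [Set.mem_empty_iff_false, iff_false]
        rintro ⟨hwY, σ1, hσ1, hw1⟩
        have hwX : w ∈ X := by
          refine ⟨hwY.1, fun x => if x ∈ X then τ x else if x ∈ Y then σ1 x
            else fb E U x, ?_, ?_⟩
          · intro x hpx hxU
            show (x, if x ∈ X then τ x else if x ∈ Y then σ1 x else fb E U x) ∈ E ∧
              (if x ∈ X then τ x else if x ∈ Y then σ1 x else fb E U x) ∈ U
            by_cases h1 : x ∈ X
            · rw [if_pos h1]; exact hτ x hpx hxU
            · rw [if_neg h1]
              by_cases h2 : x ∈ Y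
              · rw [if_pos h2]
                have h := hσ1 x hpx h2
                exact ⟨h.1, h.2.1⟩
              · rw [if_neg h2]; exact fb_spec U hcl hxU
          · intro ρ h0 hU' hE' hcomp
            by_cases hex : ∃ n, ρ n ∈ X
            · obtain ⟨n0, hn0⟩ := hex
              have hXn : ∀ m, n0 ≤ m → ρ m ∈ X ∧ WinsIn V0 V1 E π U (!b) τ (ρ m) := by
                intro m hm
                induction m, hm using Nat.le_induction with
                | base => exact ⟨hn0, hwτ _ hn0⟩
                | succ k hk ihk =>
                  have hs := winsIn_step ihk.2 (hU' k) (hU' (k + 1)) (hE' k)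
                    (fun hpk => by
                      have hc := hcomp k hpk
                      rw [hc]
                      show (if ρ k ∈ X then τ (ρ k) else if ρ k ∈ Y then σ1 (ρ k)
                        else fb E U (ρ k)) = τ (ρ k)
                      rw [if_pos ihk.1])
                  exact ⟨⟨hU' (k + 1), τ, hτ, hs⟩, hs⟩
              have hG : Good (!b) (fun k => π (ρ (k + n0))) := by
                refine (hXn n0 le_rfl).2 (fun k => ρ (k + n0))
                  (by show ρ (0 + n0) = ρ n0; rw [Nat.zero_add])
                  (fun k => hU' _)
                  (fun k => by
                    have h := hE' (k + n0)
                    show (ρ (k + n0), ρ (k + 1 + n0)) ∈ E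
                    rwa [show k + 1 + n0 = k + n0 + 1 by omega]) ?_
                intro k hpk
                have hc := hcomp (k + n0) hpk
                show ρ (k + 1 + n0) = τ (ρ (k + n0))
                rw [show k + 1 + n0 = k + n0 + 1 by omega, hc]
                show (if ρ (k + n0) ∈ X then τ (ρ (k + n0)) else if ρ (k + n0) ∈ Y
                  then σ1 (ρ (k + n0)) else fb E U (ρ (k + n0))) = τ (ρ (k + n0))
                rw [if_pos (hXn (k + n0) (by omega)).1]
              exact (good_shift n0).mp hG
            · push_neg at hex
              have hYn : ∀ n, ρ n ∈ Y := fun n => ⟨hU' n, hex n⟩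
              apply hw1 ρ h0 hYn hE'
              intro n hpn
              have hc := hcomp n hpn
              rw [hc]
              show (if ρ n ∈ X then τ (ρ n) else if ρ n ∈ Y then σ1 (ρ n)
                else fb E U (ρ n)) = σ1 (ρ n)
              rw [if_neg (hex n), if_pos (hYn n)]
        exact hwY.2 hwX
      -- key lemma: b wins everywhere on Y, then lift to U
      obtain ⟨σL, hσL, hwL⟩ := keyL hcover hb ih hYcl (fun w hw => hπ _ hw.1) hregY
      have hopp3 : ∀ x y, x ∈ Y → x ∉ P V0 V1 b → (x, y) ∈ E → y ∈ U → y ∈ Y := by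
        intro x y hx hnpb he hyU
        exact hf2 x hx (mem_P_not hcover hnpb) y he hyU
      obtain ⟨σ', hσ', hlift⟩ := lift_win (U := U) (U' := Y) (c := b) hcl
        (fun x hx => hx.1) hopp3 hσL
      have hfin : v ∈ Region V0 V1 E π U b :=
        ⟨hv, σ', hσ', hlift v hvY (hwL v hvY)⟩
      cases b
      · exact Or.inl hfin
      · exact Or.inr hfin

end Stmt8Aux

/-- in a parity game with a nonempty vertex set, some vertex is won
by some player using a memoryless strategy. -/
theorem stmt8 {V : Type*} [Nonempty V] (V0 V1 : Set V) (E : Set (V × V)) (π : V → ℕ)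
    (hdisj : Disjoint V0 V1) (hcover : V0 ∪ V1 = Set.univ)
    (hE : ∀ v : V, ∃ u, (v, u) ∈ E)
    (hbdd : ∃ B, ∀ v, π v ≤ B) :
    WinRegionAll V0 E π ParityWin ∪ WinRegionAll V1 E π ParityWinᶜ ≠ ∅ := by
  intro hemp
  obtain ⟨B, hB⟩ := hbdd
  obtain ⟨v⟩ := (inferInstance : Nonempty V)
  have hcl : Stmt8Aux.Closed E Set.univ :=
    fun w _ => (hE w).elim fun u hu => ⟨u, Set.mem_univ u, hu⟩
  have h := Stmt8Aux.Dmain hcover B Set.univ hcl (fun w _ => hB w) v (Set.mem_univ v)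
  have hmem : v ∈ WinRegionAll V0 E π ParityWin ∪ WinRegionAll V1 E π ParityWinᶜ := by
    rcases h with ⟨-, σ, hσ, hw⟩ | ⟨-, σ, hσ, hw⟩
    · left
      refine ⟨σ, fun x hx => (hσ x (by simpa [Stmt8Aux.P] using hx) (Set.mem_univ x)).1, ?_⟩
      intro ρ h0 hrun hcompat
      have hg := hw ρ h0 (fun n => Set.mem_univ _) hrun
        (fun n hn => hcompat n (by simpa [Stmt8Aux.P] using hn))
      simpa [Stmt8Aux.Good, Stmt8Aux.GoodM, ParityWin] using hg
    · right
      refine ⟨σ, fun x hx => (hσ x (by simpa [Stmt8Aux.P] using hx) (Set.mem_univ x)).1, ?_⟩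
      intro ρ h0 hrun hcompat
      have hg := hw ρ h0 (fun n => Set.mem_univ _) hrun
        (fun n hn => hcompat n (by simpa [Stmt8Aux.P] using hn))
      simpa [Stmt8Aux.Good, Stmt8Aux.GoodM, ParityWin] using hg
  rw [hemp] at hmem
  exact hmem
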